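/- Let 1 → K → G → Q → 1 be a short exact sequence with G = ⟨A | C⟩ finitely presented and K generated by a finite set X. Let (α_G, ρ_G) be an area-radius pair for the presentation ⟨A | C⟩, with α_G and ρ_G nondecreasing. Let R ⊆ F(X) be a finite set of elements each representing 1 in K, let push be a push-down map for this data (with lift ι̃ : F(X) → F(A) and induced ψ̃ : F(A) → Q), and suppose: (a) Area_R(push_{1_Q}(ι̃(x))·x⁻¹) < ∞ for all x ∈ X; and (b) there is a nondecreasing function f : ℕ → ℕ such that Area_R(push_q(C)) ≤ f(N) for every C ∈ C and every q ∈ Q whose word length with respect to the generating set ψ̃(A) of Q is at most N. Then K is presented by ⟨X | R⟩ (the kernel of F(X) → K equals the normal closure of R), and the Dehn function satisfies δ_{K,X,R}(N) ≼ α_G(N)·f(ρ_G(N)): there is a constant C' > 0 such that δ_{K,X,R}(N) ≤ C'·α_G(C'N + C')·f(ρ_G(C'N + C')) + C'N + C' for all N. -/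

import Mathlib

open scoped BigOperators Pointwise commutatorElement

namespace DehnPaper

noncomputable section

/-- Word length (length of the reduced word) of an element of a free group. -/
def wordLength {S : Type*} (w : FreeGroup S) : ℕ :=
  letI := Classical.decEq S
  w.toWord.length

/-- `AreaLe R w M` : `w` is a product of at most `M` conjugates of elements of `R ∪ R⁻¹`. -/
def AreaLe {F : Type*} [Group F] (R : Set F) (w : F) (M : ℕ) : Prop :=
  ∃ k : ℕ, k ≤ M ∧ ∃ u ρ : Fin k → F,
    (∀ i, ρ i ∈ R ∪ R⁻¹) ∧ w = (List.ofFn fun i => (u i)⁻¹ * ρ i * u i).prod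

/-- The area of `w` with respect to `R`, as an extended natural number
(`⊤` if `w` is not a product of conjugates of elements of `R ∪ R⁻¹`). -/
def area {F : Type*} [Group F] (R : Set F) (w : F) : ℕ∞ :=
  sInf ((fun k : ℕ => (k : ℕ∞)) '' {k | AreaLe R w k})

/-- The Dehn function of the presentation data `(π, rels)`. -/
def dehn {S K : Type*} [Group K] (π : FreeGroup S →* K)
    (rels : Set (FreeGroup S)) (N : ℕ) : ℕ∞ :=
  ⨆ w ∈ {w : FreeGroup S | wordLength w ≤ N ∧ π w = 1}, area rels w

/-- `(π, rels)` is a presentation: `π` is surjective and its kernel is the normal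
closure of `rels`. -/
def IsPresentation {S K : Type*} [Group K] (π : FreeGroup S →* K)
    (rels : Set (FreeGroup S)) : Prop :=
  Function.Surjective π ∧ π.ker = Subgroup.normalClosure rels

def FinitelyPresented (K : Type*) [Group K] : Prop :=
  ∃ (S : Type) (_ : Fintype S) (π : FreeGroup S →* K) (rels : Finset (FreeGroup S)),
    IsPresentation π (rels : Set (FreeGroup S))

/-- `f ≼ g` for (extended-natural-valued) Dehn functions. -/
def DehnLe (f g : ℕ → ℕ∞) : Prop :=
  ∃ C : ℕ, 0 < C ∧ ∀ N : ℕ,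
    f N ≤ (C : ℕ∞) * g (C * N + C) + (C : ℕ∞) * (N : ℕ∞) + (C : ℕ∞)

def DehnEquiv (f g : ℕ → ℕ∞) : Prop := DehnLe f g ∧ DehnLe g f

/-- `K` has polynomially bounded Dehn function (for every finite presentation). -/
def PolyBoundedDehn (K : Type*) [Group K] : Prop :=
  ∀ (S : Type) (_ : Fintype S) (π : FreeGroup S →* K) (rels : Finset (FreeGroup S)),
    IsPresentation π (rels : Set (FreeGroup S)) →
    ∃ d C' : ℕ, 0 < C' ∧ ∀ N : ℕ,
      dehn π (rels : Set (FreeGroup S)) N ≤ ((C' * N ^ d + C' : ℕ) : ℕ∞)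

def ResiduallyFree (K : Type*) [Group K] : Prop :=
  ∀ g : K, g ≠ 1 → ∃ φ : K →* FreeGroup (Fin 2), φ g ≠ 1

/-- `K` embeds into a direct product of finitely many finitely generated free groups. -/
def IsSPF (K : Type*) [Group K] : Prop :=
  ∃ (n : ℕ) (m : Fin n → ℕ) (f : K →* ((i : Fin n) → FreeGroup (Fin (m i)))),
    Function.Injective f

/-! ### Products of free groups and the kernels `K_{m₁,…,mₙ}(r)` -/

/-- `ℤ^r`, written multiplicatively. -/
abbrev Zr (r : ℕ) := Multiplicative (Fin r → ℤ)

/-- The `j`-th standard basis vector of `ℤ^r`. -/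
def basisVec (r : ℕ) (j : Fin r) : Zr r := Multiplicative.ofAdd (Pi.single j 1)

/-- The map `F_{mα} → ℤ^r` sending `a_j` to `e_j` for `j ≤ r` and to `0` otherwise. -/
def psiFactor (r mα : ℕ) : FreeGroup (Fin mα) →* Zr r :=
  FreeGroup.lift fun j => if h : j.val < r then basisVec r ⟨j.val, h⟩ else 1

/-- The map `ψ : F_{m₁} × ⋯ × F_{mₙ} → ℤ^r`. -/
def psi (n r : ℕ) (m : Fin n → ℕ) :
    ((α : Fin n) → FreeGroup (Fin (m α))) →* Zr r where
  toFun g := ∏ α, psiFactor r (m α) (g α)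
  map_one' := by simp
  map_mul' g h := by
    simp only [Pi.mul_apply, map_mul]
    exact Finset.prod_mul_distrib

/-- The kernel `K_{m₁,…,mₙ}(r)`. -/
def Kker (n r : ℕ) (m : Fin n → ℕ) :
    Subgroup ((α : Fin n) → FreeGroup (Fin (m α))) :=
  (psi n r m).ker

/-- The map `ψ : F^(1) × ⋯ × F^(n) → ℤ^r` in the equal-rank case, sending each
`a_j^(α)` to `e_j`. -/
def psiEq (n r : ℕ) : ((_ : Fin n) → FreeGroup (Fin r)) →* Zr r where
  toFun g := ∏ α, FreeGroup.lift (basisVec r) (g α)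
  map_one' := by simp
  map_mul' g h := by
    simp only [Pi.mul_apply, map_mul]
    exact Finset.prod_mul_distrib

def lastIdx (n : ℕ) (hn : 0 < n) : Fin n := ⟨n - 1, by omega⟩

/-- The generator `a_i^(α)` of the direct product of `n` free groups of rank `r`. -/
def aElem (n r : ℕ) (α : Fin n) (i : Fin r) : (_ : Fin n) → FreeGroup (Fin r) :=
  Pi.mulSingle α (FreeGroup.of i)

/-- The generator `x_i^(α) = a_i^(α) (a_i^(n))⁻¹` of `K_r^n(r)`. -/
def xElem (n r : ℕ) (hn : 0 < n) (p : Fin (n - 1) × Fin r) :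
    (_ : Fin n) → FreeGroup (Fin r) :=
  aElem n r (Fin.castLE (by omega) p.1) p.2 * (aElem n r (lastIdx n hn) p.2)⁻¹

/-! ### The relation sets `R_r^n` -/

/-- The formal generator `x_i^(α)` in the free group on `X_r`. -/
def xg {B : Type*} {r : ℕ} (α : B) (i : Fin r) : FreeGroup (B × Fin r) :=
  FreeGroup.of (α, i)

def IsSign (ε : ℤ) : Prop := ε = 1 ∨ ε = -1

def R1 (n r : ℕ) : Set (FreeGroup (Fin (n - 1) × Fin r)) :=
  {w | ∃ (α β : Fin (n - 1)) (i : Fin r), α ≠ β ∧ w = ⁅xg α i, xg β i⁆}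

def R2 (n r : ℕ) : Set (FreeGroup (Fin (n - 1) × Fin r)) :=
  {w | ∃ (α β γ : Fin (n - 1)) (i j : Fin r), i ≠ j ∧ α ≠ β ∧ α ≠ γ ∧ β ≠ γ ∧
    w = ⁅xg α i, xg β j * (xg γ j)⁻¹⁆}

def R3 (n r : ℕ) : Set (FreeGroup (Fin (n - 1) × Fin r)) :=
  {w | ∃ (α β : Fin (n - 1)) (i j : Fin r) (ε δ : ℤ), i ≠ j ∧ α ≠ β ∧
    IsSign ε ∧ IsSign δ ∧
    w = ⁅xg α i ^ ε, xg β j ^ δ⁆ * ⁅xg α j ^ δ, xg β i ^ ε⁆}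

def R4 (n r : ℕ) : Set (FreeGroup (Fin (n - 1) × Fin r)) :=
  {w | ∃ (α β : Fin (n - 1)) (i j k : Fin r) (ε δ : ℤ),
    i ≠ j ∧ i ≠ k ∧ j ≠ k ∧ α ≠ β ∧ IsSign ε ∧ IsSign δ ∧
    w = ⁅xg α i, ⁅xg β j ^ ε, xg α k ^ δ * xg β k ^ (-δ)⁆⁆}

def R5 (n r : ℕ) : Set (FreeGroup (Fin (n - 1) × Fin r)) :=
  {w | ∃ (α β : Fin (n - 1)) (i j k h : Fin r) (ε δ σ τ : ℤ),
    i ≠ j ∧ i ≠ k ∧ i ≠ h ∧ j ≠ k ∧ j ≠ h ∧ k ≠ h ∧ α ≠ β ∧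
    IsSign ε ∧ IsSign δ ∧ IsSign σ ∧ IsSign τ ∧
    w = ⁅⁅xg α i ^ ε, xg α k ^ δ * xg β k ^ (-δ)⁆,
          ⁅xg β j ^ σ, xg α h ^ τ * xg β h ^ (-τ)⁆⁆}

/-- The relation set `R_r^n`. -/
def Rset (n r : ℕ) : Set (FreeGroup (Fin (n - 1) × Fin r)) :=
  if n = 3 then R1 n r ∪ R3 n r ∪ R4 n r ∪ R5 n r
  else if n = 4 then R1 n r ∪ R2 n r ∪ R4 n r
  else R1 n r ∪ R2 n r

/-- The exponent `d_n`. -/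
def dExp (n : ℕ) : ℕ := if n = 3 then 7 else if n = 4 then 3 else 2

/-- The norm `‖φ‖` of a homomorphism of (finitely generated) free groups. -/
def homNorm {r r' : ℕ} (φ : FreeGroup (Fin r) →* FreeGroup (Fin r')) : ℕ :=
  Finset.univ.sup fun i : Fin r => wordLength (φ (FreeGroup.of i))

/-- The symmetrized homomorphism `φ̂`. -/
def symmHom {B : Type*} {r r' : ℕ} (φ : FreeGroup (Fin r) →* FreeGroup (Fin r')) :
    FreeGroup (B × Fin r) →* FreeGroup (B × Fin r') :=
  FreeGroup.lift fun p => FreeGroup.map (fun j => (p.1, j)) (φ (FreeGroup.of p.2))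

/-- The doubling homomorphism `ρ_r : F_r → F_{r+1}`, `v₁ ↦ v₁v₂`, `vᵢ ↦ vᵢ₊₁`. -/
def rho (r : ℕ) (hr : 1 ≤ r) : FreeGroup (Fin r) →* FreeGroup (Fin (r + 1)) :=
  FreeGroup.lift fun i =>
    if i.val = 0 then
      FreeGroup.of (⟨0, by omega⟩ : Fin (r + 1)) * FreeGroup.of (⟨1, by omega⟩ : Fin (r + 1))
    else FreeGroup.of i.succ

/-- The homomorphism `κ_{q,q'} : F_{r+2} → F_r`. -/
def kappa {r : ℕ} (q q' : Fin r → ℤ) : FreeGroup (Fin (r + 2)) →* FreeGroup (Fin r) :=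
  FreeGroup.lift fun i =>
    if h : i.val < r then FreeGroup.of (⟨i.val, h⟩ : Fin r)
    else if i.val = r then (List.ofFn fun j : Fin r => FreeGroup.of j ^ q j).prod
    else (List.ofFn fun j : Fin r => FreeGroup.of j ^ q' j).prod

/-- The set `R_r^n(m)` of thick relations. -/
def thick (n r m : ℕ) : Set (FreeGroup (Fin (n - 1) × Fin r)) :=
  {w | ∃ (φ : FreeGroup (Fin (r + 2)) →* FreeGroup (Fin (r + 2))) (q q' : Fin r → ℤ),
    homNorm φ ≤ 1 ∧ (∀ j, (q j).natAbs ≤ m + 1) ∧ (∀ j, (q' j).natAbs ≤ m + 1) ∧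
    ∃ v ∈ Rset n (r + 2), w = symmHom (kappa q q') (symmHom φ v)}

/-- The homomorphism `ψ̃ : F(A_r) → ℤ^r`, sending each `a_i^(α)` to `e_i`. -/
def psiA (n r : ℕ) : FreeGroup (Fin n × Fin r) →* Zr r :=
  FreeGroup.lift fun p => basisVec r p.2

/-- `(x₁^(β))^{-q₁} ⋯ (x_{t}^(β))^{-q_t}` (indices `< t`, in increasing order). -/
def prefProd {B : Type*} {r : ℕ} (β : B) (q : Fin r → ℤ) (t : ℕ) :
    FreeGroup (B × Fin r) :=
  (((List.finRange r).filter fun i => i.val < t).map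
    fun i => FreeGroup.of (β, i) ^ (-(q i))).prod

/-- `(x_{t+1}^(β))^{-q_{t+1}} ⋯ (x_r^(β))^{-q_r}` (indices `≥ t`, in increasing order). -/
def midProd {B : Type*} {r : ℕ} (β : B) (q : Fin r → ℤ) (t : ℕ) :
    FreeGroup (B × Fin r) :=
  (((List.finRange r).filter fun i => t ≤ i.val).map
    fun i => FreeGroup.of (β, i) ^ (-(q i))).prod

end


section AuxLemmas

variable {F : Type*} [Group F]

/-- List-based reformulation of `AreaLe`. -/
def AreaL (R : Set F) (w : F) (M : ℕ) : Prop :=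
  ∃ l : List F, l.length ≤ M ∧ (∀ g ∈ l, ∃ u ρ, ρ ∈ R ∪ R⁻¹ ∧ g = u⁻¹ * ρ * u) ∧
    w = l.prod

theorem areaLe_iff {R : Set F} {w : F} {M : ℕ} : AreaLe R w M ↔ AreaL R w M := by
  constructor
  · rintro ⟨k, hk, u, ρ, hρ, hw⟩
    refine ⟨List.ofFn fun i => (u i)⁻¹ * ρ i * u i, by simpa using hk, ?_, hw⟩
    intro g hg
    rw [List.mem_ofFn] at hg
    obtain ⟨i, rfl⟩ := hg
    exact ⟨u i, ρ i, hρ i, rfl⟩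
  · rintro ⟨l, hl, hmem, hw⟩
    choose u ρ hρ hg using fun i : Fin l.length => hmem (l.get i) (l.get_mem _)
    refine ⟨l.length, hl, u, ρ, hρ, ?_⟩
    rw [hw]
    congr 1
    have he : (fun i => (u i)⁻¹ * ρ i * u i) = l.get := funext fun i => (hg i).symm
    rw [he, List.ofFn_get]

theorem AreaL.mono {R : Set F} {w : F} {M M' : ℕ} (h : AreaL R w M) (hMM : M ≤ M') :
    AreaL R w M' := by
  obtain ⟨l, hl, hmem, hw⟩ := h
  exact ⟨l, hl.trans hMM, hmem, hw⟩

theorem AreaL.one (R : Set F) : AreaL R (1 : F) 0 :=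
  ⟨[], by simp, by simp, by simp⟩

theorem AreaL.mul {R : Set F} {w w' : F} {M M' : ℕ} (h : AreaL R w M) (h' : AreaL R w' M') :
    AreaL R (w * w') (M + M') := by
  obtain ⟨l, hl, hmem, hw⟩ := h
  obtain ⟨l', hl', hmem', hw'⟩ := h'
  refine ⟨l ++ l', by simpa using Nat.add_le_add hl hl', ?_, by simp [hw, hw']⟩
  intro g hg
  rcases List.mem_append.1 hg with hg | hg
  exacts [hmem g hg, hmem' g hg]

theorem AreaL.inv {R : Set F} {w : F} {M : ℕ} (h : AreaL R w M) : AreaL R w⁻¹ M := by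
  obtain ⟨l, hl, hmem, hw⟩ := h
  refine ⟨(l.map fun x => x⁻¹).reverse, by simpa using hl, ?_, by
    rw [hw]; exact List.prod_inv_reverse l⟩
  intro g hg
  simp only [List.mem_reverse, List.mem_map] at hg
  obtain ⟨a, ha, rfl⟩ := hg
  obtain ⟨u, ρ, hρ, rfl⟩ := hmem a ha
  refine ⟨u, ρ⁻¹, ?_, by group⟩
  rcases hρ with hρ | hρ
  · exact Or.inr (Set.inv_mem_inv.mpr hρ)
  · exact Or.inl (by simpa using hρ)

theorem conj_prod (v : F) (l : List F) :
    v⁻¹ * l.prod * v = (l.map fun g => v⁻¹ * g * v).prod := by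
  induction l with
  | nil => simp
  | cons a l ih => simp only [List.map_cons, List.prod_cons, ← ih]; group

theorem AreaL.conj {R : Set F} {w : F} {M : ℕ} (h : AreaL R w M) (v : F) :
    AreaL R (v⁻¹ * w * v) M := by
  obtain ⟨l, hl, hmem, hw⟩ := h
  refine ⟨l.map fun g => v⁻¹ * g * v, by simpa using hl, ?_, ?_⟩
  · intro g hg
    simp only [List.mem_map] at hg
    obtain ⟨a, ha, rfl⟩ := hg
    obtain ⟨u, ρ, hρ, rfl⟩ := hmem a ha
    exact ⟨u * v, ρ, hρ, by group⟩
  · rw [hw, conj_prod]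

theorem AreaL.list_prod {R : Set F} {M : ℕ} (l : List F) (h : ∀ g ∈ l, AreaL R g M) :
    AreaL R l.prod (l.length * M) := by
  induction l with
  | nil => simpa using AreaL.one R
  | cons a l ih =>
    simp only [List.prod_cons, List.length_cons]
    have := (h a (by simp)).mul (ih fun g hg => h g (List.mem_cons_of_mem _ hg))
    exact this.mono (by ring_nf; omega)

theorem AreaL.mem_normalClosure {R : Set F} {w : F} {M : ℕ} (h : AreaL R w M) :
    w ∈ Subgroup.normalClosure R := by
  obtain ⟨l, _, hmem, rfl⟩ := h
  refine Subgroup.list_prod_mem _ fun g hg => ?_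
  obtain ⟨u, ρ, hρ, rfl⟩ := hmem g hg
  have hρm : ρ ∈ Subgroup.normalClosure R := by
    rcases hρ with hρ | hρ
    · exact Subgroup.subset_normalClosure hρ
    · exact (Subgroup.normalClosure R).inv_mem_iff.mp
        (Subgroup.subset_normalClosure (by simpa using hρ))
  simpa using Subgroup.normalClosure_normal.conj_mem ρ hρm u⁻¹

end AuxLemmas

section WL
variable {S T : Type*}

theorem wordLength_one : wordLength (1 : FreeGroup S) = 0 := by
  letI := Classical.decEq S
  simp [wordLength, FreeGroup.toWord_one]

theorem wordLength_inv (w : FreeGroup S) : wordLength w⁻¹ = wordLength w := by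
  letI := Classical.decEq S
  simp [wordLength, FreeGroup.toWord_inv, FreeGroup.invRev]

theorem wordLength_mul_le (w w' : FreeGroup S) :
    wordLength (w * w') ≤ wordLength w + wordLength w' := by
  letI := Classical.decEq S
  have := (FreeGroup.toWord_mul_sublist w w').length_le
  simpa [wordLength] using this

theorem wordLength_map_le (φ : FreeGroup S →* FreeGroup T) (C : ℕ)
    (hC : ∀ x : S, wordLength (φ (FreeGroup.of x)) ≤ C) (w : FreeGroup S) :
    wordLength (φ w) ≤ C * wordLength w := by
  letI := Classical.decEq S
  have key : ∀ L : List (S × Bool), wordLength (φ (FreeGroup.mk L)) ≤ C * L.length := by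
    intro L
    induction L with
    | nil =>
      have h1 : FreeGroup.mk ([] : List (S × Bool)) = (1 : FreeGroup S) := rfl
      simp [h1, wordLength_one]
    | cons p L ih =>
      have hsplit : FreeGroup.mk (p :: L) = FreeGroup.mk [p] * FreeGroup.mk L := by
        rw [FreeGroup.mul_mk]; rfl
      have hletter : wordLength (φ (FreeGroup.mk [p])) ≤ C := by
        obtain ⟨x, b⟩ := p
        cases b
        · have h2 : FreeGroup.mk [(x, false)] = (FreeGroup.of x)⁻¹ := by
            rw [FreeGroup.of, FreeGroup.inv_mk]; rfl
          rw [h2, map_inv, wordLength_inv]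
          exact hC x
        · exact hC x
      calc wordLength (φ (FreeGroup.mk (p :: L)))
          ≤ wordLength (φ (FreeGroup.mk [p])) + wordLength (φ (FreeGroup.mk L)) := by
            rw [hsplit, map_mul]; exact wordLength_mul_le _ _
        _ ≤ C + C * L.length := Nat.add_le_add hletter ih
        _ = C * (p :: L).length := by simp [List.length_cons]; ring
  have h3 := key w.toWord
  rw [FreeGroup.mk_toWord] at h3
  simpa [wordLength] using h3

end WL

theorem pushdown_presentation_and_dehn_bound
    {K G Q : Type} [Group K] [Group G] [Group Q]
    (ι : K →* G) (hι : Function.Injective ι)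
    (pr : G →* Q) (hpr : Function.Surjective pr)
    (hexact : ι.range = pr.ker)
    (A : Type) [Fintype A] (πG : FreeGroup A →* G)
    (Cs : Finset (FreeGroup A))
    (hpres : IsPresentation πG (Cs : Set (FreeGroup A)))
    (αG ρG : ℕ → ℕ) (hαmono : Monotone αG) (hρmono : Monotone ρG)
    (hAR : ∀ w : FreeGroup A, πG w = 1 →
      ∃ k : ℕ, k ≤ αG (wordLength w) ∧ ∃ u c : Fin k → FreeGroup A,
        (∀ i, c i ∈ (Cs : Set (FreeGroup A)) ∪ (Cs : Set (FreeGroup A))⁻¹) ∧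
        (∀ i, wordLength (u i) ≤ ρG (wordLength w)) ∧
        w = (List.ofFn fun i => (u i)⁻¹ * c i * u i).prod)
    (X : Type) [Fintype X] (toK : X → K)
    (hgen : Subgroup.closure (Set.range toK) = ⊤)
    (ιlift : FreeGroup X →* FreeGroup A)
    (hlift : ∀ v : FreeGroup X, πG (ιlift v) = ι (FreeGroup.lift toK v))
    (Rs : Finset (FreeGroup X))
    (hRs : ∀ ρ ∈ Rs, FreeGroup.lift toK ρ = 1)
    (push : Q → FreeGroup A → FreeGroup X)
    (hcocycle : ∀ (q : Q) (w w' : FreeGroup A),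
      push q (w * w') = push q w * push (q * pr (πG w)) w')
    (hpush2 : ∀ x : X, FreeGroup.lift toK (push 1 (ιlift (FreeGroup.of x))) = toK x)
    (ha : ∀ x : X, ∃ M : ℕ, AreaLe (Rs : Set (FreeGroup X))
      (push 1 (ιlift (FreeGroup.of x)) * (FreeGroup.of x)⁻¹) M)
    (f : ℕ → ℕ) (hf : Monotone f)
    (hb : ∀ c ∈ Cs, ∀ (N : ℕ) (q : Q),
      (∃ w : FreeGroup A, pr (πG w) = q ∧ wordLength w ≤ N) →
      AreaLe (Rs : Set (FreeGroup X)) (push q c) (f N)) :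
    (FreeGroup.lift toK).ker = Subgroup.normalClosure (Rs : Set (FreeGroup X)) ∧
    ∃ C' : ℕ, 0 < C' ∧ ∀ N : ℕ,
      dehn (FreeGroup.lift toK) (Rs : Set (FreeGroup X)) N ≤
        ((C' * (αG (C' * N + C') * f (ρG (C' * N + C'))) + C' * N + C' : ℕ) : ℕ∞) :=  by
  letI := Classical.decEq X
  letI := Classical.decEq A
  classical
  -- basic consequences of the hypotheses
  have hψι : ∀ v : FreeGroup X, pr (πG (ιlift v)) = 1 := by
    intro v
    have hm : πG (ιlift v) ∈ pr.ker := hexact ▸ ⟨FreeGroup.lift toK v, (hlift v).symm⟩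
    exact hm
  have hCone : ∀ c ∈ Cs, πG c = 1 := by
    intro c hc
    have : c ∈ πG.ker := by rw [hpres.2]; exact Subgroup.subset_normalClosure hc
    exact this
  have push_one : ∀ q : Q, push q 1 = 1 := by
    intro q
    have h := hcocycle q 1 1
    simp only [mul_one, map_one] at h
    exact (left_eq_mul.mp h)
  have push_inv : ∀ (q : Q) (w : FreeGroup A),
      push q w⁻¹ = (push (q * pr (πG w⁻¹)) w)⁻¹ := by
    intro q w
    have h := hcocycle q w⁻¹ w
    rw [inv_mul_cancel, push_one] at h
    exact eq_inv_of_mul_eq_one_left h.symm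
  have Pf_mul : ∀ v v' : FreeGroup X,
      push 1 (ιlift (v * v')) = push 1 (ιlift v) * push 1 (ιlift v') := by
    intro v v'
    have h := hcocycle 1 (ιlift v) (ιlift v')
    rw [← map_mul, hψι, mul_one] at h
    exact h
  have Pf_one : push 1 (ιlift 1) = 1 := by rw [map_one]; exact push_one 1
  have Pf_inv : ∀ v : FreeGroup X, push 1 (ιlift v⁻¹) = (push 1 (ιlift v))⁻¹ := by
    intro v
    have h1 : pr (πG (ιlift v)⁻¹) = 1 := by rw [map_inv, map_inv, hψι, inv_one]
    have h := push_inv 1 (ιlift v)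
    rw [h1, mul_one] at h
    rw [map_inv]
    exact h
  -- constants
  choose Mx hMx using ha
  set M₀ : ℕ := Finset.univ.sup Mx with hM₀
  set C₀ : ℕ := Finset.univ.sup (fun x : X => wordLength (ιlift (FreeGroup.of x))) with hC₀
  have hC₀le : ∀ x : X, wordLength (ιlift (FreeGroup.of x)) ≤ C₀ := by
    intro x; rw [hC₀]
    exact Finset.le_sup (f := fun x : X => wordLength (ιlift (FreeGroup.of x))) (Finset.mem_univ x)
  have hlen : ∀ v : FreeGroup X, wordLength (ιlift v) ≤ C₀ * wordLength v :=
    wordLength_map_le ιlift C₀ hC₀le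
  have hletter : ∀ x : X, AreaL (Rs : Set (FreeGroup X))
      (push 1 (ιlift (FreeGroup.of x)) * (FreeGroup.of x)⁻¹) M₀ := by
    intro x
    refine (areaLe_iff.mp (hMx x)).mono ?_
    rw [hM₀]; exact Finset.le_sup (f := Mx) (Finset.mem_univ x)
  -- area of `push 1 (ιlift v) * v⁻¹`
  have keyC : ∀ L : List (X × Bool),
      AreaL (Rs : Set (FreeGroup X))
        (push 1 (ιlift (FreeGroup.mk L)) * (FreeGroup.mk L)⁻¹) (M₀ * L.length) := by
    intro L
    induction L with
    | nil =>
      have h1 : FreeGroup.mk ([] : List (X × Bool)) = 1 := rfl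
      rw [h1, Pf_one, one_mul, inv_one]
      exact (AreaL.one _).mono (by omega)
    | cons p L ih =>
      obtain ⟨x, b⟩ := p
      have hsplit : FreeGroup.mk ((x, b) :: L) = FreeGroup.mk [(x, b)] * FreeGroup.mk L := by
        rw [FreeGroup.mul_mk]; rfl
      have hlet : AreaL (Rs : Set (FreeGroup X))
          (push 1 (ιlift (FreeGroup.mk [(x, b)])) * (FreeGroup.mk [(x, b)])⁻¹) M₀ := by
        cases b
        · have hmm : FreeGroup.mk [(x, false)] = (FreeGroup.of x)⁻¹ := by
            rw [FreeGroup.of, FreeGroup.inv_mk]; rfl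
          rw [hmm, Pf_inv, inv_inv]
          have hgp : (push 1 (ιlift (FreeGroup.of x)))⁻¹ * FreeGroup.of x
              = (FreeGroup.of x)⁻¹
                * (push 1 (ιlift (FreeGroup.of x)) * (FreeGroup.of x)⁻¹)⁻¹
                * FreeGroup.of x := by group
          rw [hgp]
          exact (hletter x).inv.conj _
        · have hmm : FreeGroup.mk [(x, true)] = FreeGroup.of x := rfl
          rw [hmm]; exact hletter x
      rw [hsplit, Pf_mul]
      have heq : push 1 (ιlift (FreeGroup.mk [(x, b)])) * push 1 (ιlift (FreeGroup.mk L))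
            * (FreeGroup.mk [(x, b)] * FreeGroup.mk L)⁻¹
          = (push 1 (ιlift (FreeGroup.mk [(x, b)])) * (FreeGroup.mk [(x, b)])⁻¹)
            * ((FreeGroup.mk [(x, b)])⁻¹⁻¹
                * (push 1 (ιlift (FreeGroup.mk L)) * (FreeGroup.mk L)⁻¹)
                * (FreeGroup.mk [(x, b)])⁻¹) := by group
      rw [heq]
      have h4 := hlet.mul (ih.conj (FreeGroup.mk [(x, b)])⁻¹)
      exact h4.mono (by simp [List.length_cons, Nat.mul_succ]; omega)
  have keyC' : ∀ v : FreeGroup X,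
      AreaL (Rs : Set (FreeGroup X)) (push 1 (ιlift v) * v⁻¹) (M₀ * wordLength v) := by
    intro v
    have h := keyC v.toWord
    rw [FreeGroup.mk_toWord] at h
    exact h
  -- push of a product of elements with trivial image in Q
  have pushprod : ∀ l : List (FreeGroup A), (∀ g ∈ l, pr (πG g) = 1) →
      push 1 l.prod = (l.map (push 1)).prod := by
    intro l
    induction l with
    | nil => intro _; simpa using push_one 1
    | cons a l ih =>
      intro hl
      rw [List.prod_cons, hcocycle, hl a (by simp), mul_one, List.map_cons, List.prod_cons,
        ih (fun g hg => hl g (List.mem_cons_of_mem _ hg))]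
  -- the main area estimate
  have mainArea : ∀ w : FreeGroup X, FreeGroup.lift toK w = 1 →
      AreaL (Rs : Set (FreeGroup X)) w
        (M₀ * wordLength w
          + αG (C₀ * wordLength w) * f (ρG (C₀ * wordLength w))) := by
    intro w hw1
    have hπ : πG (ιlift w) = 1 := by rw [hlift, hw1, map_one]
    obtain ⟨k, hk, u, c, hc, hu, hprod⟩ := hAR (ιlift w) hπ
    have hc1 : ∀ i, πG (c i) = 1 := by
      intro i
      rcases hc i with h | h
      · exact hCone _ h
      · have h5 : (c i)⁻¹ ∈ Cs := by simpa using h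
        have h6 := hCone _ h5
        rw [map_inv, inv_eq_one] at h6
        exact h6
    have hterm : ∀ i : Fin k, AreaL (Rs : Set (FreeGroup X))
        (push 1 ((u i)⁻¹ * c i * u i)) (f (ρG (wordLength (ιlift w)))) := by
      intro i
      have h1 : push 1 ((u i)⁻¹ * (c i * u i))
          = push 1 (u i)⁻¹ * push (pr (πG (u i)⁻¹)) (c i * u i) := by
        have h := hcocycle 1 (u i)⁻¹ (c i * u i)
        rwa [one_mul] at h
      have h2 : push (pr (πG (u i)⁻¹)) (c i * u i)
          = push (pr (πG (u i)⁻¹)) (c i) * push (pr (πG (u i)⁻¹)) (u i) := by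
        have h := hcocycle (pr (πG (u i)⁻¹)) (c i) (u i)
        rwa [hc1 i, map_one, mul_one] at h
      have h3 : push 1 (u i)⁻¹ = (push (pr (πG (u i)⁻¹)) (u i))⁻¹ := by
        have h := push_inv 1 (u i)
        rwa [one_mul] at h
      have hA : AreaL (Rs : Set (FreeGroup X))
          (push (pr (πG (u i)⁻¹)) (c i)) (f (ρG (wordLength (ιlift w)))) := by
        have hqwit : ∃ w' : FreeGroup A,
            pr (πG w') = pr (πG (u i)⁻¹) ∧ wordLength w' ≤ ρG (wordLength (ιlift w)) :=
          ⟨(u i)⁻¹, rfl, by rw [wordLength_inv]; exact hu i⟩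
        rcases hc i with h | h
        · exact areaLe_iff.mp (hb _ h (ρG (wordLength (ιlift w))) _ hqwit)
        · have hd : (c i)⁻¹ ∈ Cs := by simpa using h
          have h5 := push_inv (pr (πG (u i)⁻¹)) ((c i)⁻¹)
          rw [inv_inv, hc1 i, map_one, mul_one] at h5
          rw [h5]
          exact (areaLe_iff.mp (hb _ hd (ρG (wordLength (ιlift w))) _ hqwit)).inv
      have hfinal : push 1 ((u i)⁻¹ * c i * u i)
          = (push (pr (πG (u i)⁻¹)) (u i))⁻¹ * push (pr (πG (u i)⁻¹)) (c i)
            * push (pr (πG (u i)⁻¹)) (u i) := by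
        calc push 1 ((u i)⁻¹ * c i * u i)
            = push 1 ((u i)⁻¹ * (c i * u i)) := by rw [mul_assoc]
          _ = push 1 (u i)⁻¹ * push (pr (πG (u i)⁻¹)) (c i * u i) := h1
          _ = (push (pr (πG (u i)⁻¹)) (u i))⁻¹
              * (push (pr (πG (u i)⁻¹)) (c i) * push (pr (πG (u i)⁻¹)) (u i)) := by
              rw [h2, h3]
          _ = _ := by rw [mul_assoc]
      rw [hfinal]
      exact hA.conj _
    have hψterms : ∀ g ∈ List.ofFn (fun i : Fin k => (u i)⁻¹ * c i * u i),
        pr (πG g) = 1 := by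
      intro g hg
      rw [List.mem_ofFn] at hg
      obtain ⟨i, rfl⟩ := hg
      simp [map_mul, map_inv, hc1 i]
    have hPfw : AreaL (Rs : Set (FreeGroup X)) (push 1 (ιlift w))
        (k * f (ρG (wordLength (ιlift w)))) := by
      have hp : push 1 (ιlift w)
          = ((List.ofFn fun i : Fin k => (u i)⁻¹ * c i * u i).map (push 1)).prod := by
        rw [hprod]
        exact pushprod _ hψterms
      rw [hp]
      have hall : ∀ g ∈ (List.ofFn fun i : Fin k => (u i)⁻¹ * c i * u i).map (push 1),
          AreaL (Rs : Set (FreeGroup X)) g (f (ρG (wordLength (ιlift w)))) := by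
        intro g hg
        rw [List.mem_map] at hg
        obtain ⟨a, ha, rfl⟩ := hg
        rw [List.mem_ofFn] at ha
        obtain ⟨i, rfl⟩ := ha
        exact hterm i
      have h6 := AreaL.list_prod _ hall
      simpa using h6
    have hww : w = (push 1 (ιlift w) * w⁻¹)⁻¹ * push 1 (ιlift w) := by group
    have hdone : AreaL (Rs : Set (FreeGroup X)) w
        (M₀ * wordLength w + k * f (ρG (wordLength (ιlift w)))) := by
      have hdone' := (keyC' w).inv.mul hPfw
      rwa [← hww] at hdone'
    refine hdone.mono (Nat.add_le_add le_rfl ?_)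
    exact Nat.mul_le_mul (hk.trans (hαmono (hlen w))) (hf (hρmono (hlen w)))
  constructor
  · apply le_antisymm
    · intro w hw
      exact (mainArea w (by simpa using hw)).mem_normalClosure
    · refine Subgroup.normalClosure_le_normal ?_
      intro ρ hρ
      exact MonoidHom.mem_ker.mpr (hRs ρ hρ)
  · refine ⟨M₀ + C₀ + 1, by omega, ?_⟩
    intro N
    set C' := M₀ + C₀ + 1 with hC'
    unfold dehn
    refine iSup₂_le fun w hw => ?_
    obtain ⟨hwlen, hw1⟩ := hw
    have hA := mainArea w hw1
    have harea : area (Rs : Set (FreeGroup X)) w ≤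
        ((M₀ * wordLength w
          + αG (C₀ * wordLength w) * f (ρG (C₀ * wordLength w)) : ℕ) : ℕ∞) :=
      sInf_le ⟨_, areaLe_iff.mpr hA, rfl⟩
    refine harea.trans ?_
    rw [Nat.cast_le]
    have e1 : C₀ * wordLength w ≤ C' * N + C' := by
      calc C₀ * wordLength w ≤ C₀ * N := Nat.mul_le_mul_left _ hwlen
        _ ≤ C' * N := Nat.mul_le_mul_right _ (by omega)
        _ ≤ C' * N + C' := Nat.le_add_right _ _
    have e2 : αG (C₀ * wordLength w) * f (ρG (C₀ * wordLength w))
        ≤ αG (C' * N + C') * f (ρG (C' * N + C')) :=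
      Nat.mul_le_mul (hαmono e1) (hf (hρmono e1))
    have e3 : M₀ * wordLength w ≤ C' * N := Nat.mul_le_mul (by omega) hwlen
    have e4 : αG (C' * N + C') * f (ρG (C' * N + C'))
        ≤ C' * (αG (C' * N + C') * f (ρG (C' * N + C'))) :=
      Nat.le_mul_of_pos_left _ (by omega)
    linarith [e2, e3, e4]

end DehnPaper
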